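/- Let q, p satisfy [q,p] = i and set T_1 = qp + pq. Then Σ_{k=0}^{n} C(n,k) q^k p^n q^{n−k} = S_n(T_1), where S_n is defined by S_0=1, S_1(x)=x, S_{n+1}(x)= x S_n(x) − n² S_{n−1}(x). -/

import Mathlib

open Finset Polynomial

section weylAux
variable {A : Type*} [Ring A] [Algebra ℂ A]

private lemma natsmul (m : ℕ) (x : A) : (m : A) * x = (m : ℂ) • x := by
  rw [Algebra.smul_def, map_natCast]

private lemma pascal_sum (f : ℕ → A) (n : ℕ) :
    ∑ j ∈ range (n + 3), ((n + 2).choose j : ℂ) • f j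
      = ∑ k ∈ range (n + 2), ((n + 1).choose k : ℂ) • f k
        + ∑ k ∈ range (n + 2), ((n + 1).choose k : ℂ) • f (k + 1) := by
  rw [Finset.sum_range_succ' (fun j => (((n + 2).choose j : ℕ) : ℂ) • f j) (n + 2)]
  have e1 : ∀ i, (((n + 2).choose (i + 1) : ℕ) : ℂ) • f (i + 1)
      = (((n + 1).choose i : ℕ) : ℂ) • f (i + 1) + (((n + 1).choose (i + 1) : ℕ) : ℂ) • f (i + 1) := by
    intro i
    rw [Nat.choose_succ_succ (n + 1) i]
    push_cast
    rw [add_smul]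
  simp only [e1]
  rw [Finset.sum_add_distrib]
  have e2 : ∑ i ∈ range (n + 2), (((n + 1).choose (i + 1) : ℕ) : ℂ) • f (i + 1)
        + (((n + 2).choose 0 : ℕ) : ℂ) • f 0
      = ∑ k ∈ range (n + 2), (((n + 1).choose k : ℕ) : ℂ) • f k := by
    have e3 : ∑ k ∈ range (n + 3), (((n + 1).choose k : ℕ) : ℂ) • f k
        = ∑ k ∈ range (n + 2), (((n + 1).choose k : ℕ) : ℂ) • f k := by
      rw [Finset.sum_range_succ]
      simp [Nat.choose_eq_zero_of_lt]
    rw [← e3, Finset.sum_range_succ' (fun k => (((n + 1).choose k : ℕ) : ℂ) • f k) (n + 2)]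
    simp
  rw [add_assoc, e2]
  abel

private lemma abel_sum (B : ℕ → A) (f c : ℕ → ℂ) (n : ℕ)
    (hc0 : c 0 = f 0) (hcs : ∀ k, c (k + 1) = f (k + 1) - f k) (htop : f (n + 1) = 0) :
    ∑ k ∈ range (n + 2), c k • B k = ∑ k ∈ range (n + 1), f k • (B k - B (k + 1)) := by
  rw [Finset.sum_range_succ' (fun k => c k • B k) (n + 1)]
  simp only [hcs, hc0, sub_smul, smul_sub]
  rw [Finset.sum_sub_distrib, Finset.sum_sub_distrib]
  have e1 : ∑ k ∈ range (n + 1), f (k + 1) • B (k + 1) + f 0 • B 0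
      = ∑ k ∈ range (n + 1), f k • B k := by
    rw [← Finset.sum_range_succ' (fun k => f k • B k) (n + 1), Finset.sum_range_succ]
    simp [htop]
  rw [sub_add_eq_add_sub, e1]

private lemma coeff_id (n k : ℕ) :
    (((n : ℂ) + 1) - 2 * ((k : ℂ) + 1)) * (((n + 1).choose (k + 1) : ℕ) : ℂ)
      = ((n : ℂ) + 1) * ((n.choose (k + 1) : ℕ) : ℂ) - ((n : ℂ) + 1) * ((n.choose k : ℕ) : ℂ) := by
  have hI : ((k : ℂ) + 1) * (((n + 1).choose (k + 1) : ℕ) : ℂ)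
      = ((n : ℂ) + 1) * ((n.choose k : ℕ) : ℂ) := by
    have := Nat.add_one_mul_choose_eq n k
    have h2 : ((Nat.succ n * n.choose k : ℕ) : ℂ) = (((n + 1).choose (k + 1) * (k + 1) : ℕ) : ℂ) := by
      exact_mod_cast congrArg (Nat.cast (R := ℂ)) this
    push_cast at h2
    linear_combination -h2
  have hII : (((n + 1).choose (k + 1) : ℕ) : ℂ)
      = ((n.choose k : ℕ) : ℂ) + ((n.choose (k + 1) : ℕ) : ℂ) := by
    have := Nat.choose_succ_succ (n + 1 - 1) k
    simp only [Nat.add_sub_cancel] at this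
    exact_mod_cast congrArg (Nat.cast (R := ℂ)) this
  linear_combination (-2 : ℂ) * hI + ((n : ℂ) + 1) * hII

variable (q p : A)

private lemma key1 (h : q * p - p * q = algebraMap ℂ A Complex.I) :
    ∀ m : ℕ, q * p ^ (m + 1) = p ^ (m + 1) * q + (((m : ℂ) + 1) * Complex.I) • p ^ m := by
  have hqp : q * p = p * q + Complex.I • (1 : A) := by
    rw [← Algebra.algebraMap_eq_smul_one, ← h]; abel
  intro m
  induction m with
  | zero => simpa using hqp
  | succ m ih =>
      have h1 : q * p ^ (m + 2) = (q * p ^ (m + 1)) * p := by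
        rw [mul_assoc, ← pow_succ]
      rw [h1, ih, add_mul, smul_mul_assoc, mul_assoc, ← pow_succ, hqp, mul_add,
        ← mul_assoc, ← pow_succ, mul_smul_comm, mul_one]
      push_cast
      module

private lemma key2 (h : q * p - p * q = algebraMap ℂ A Complex.I) :
    ∀ m : ℕ, p * q ^ (m + 1) = q ^ (m + 1) * p - (((m : ℂ) + 1) * Complex.I) • q ^ m := by
  have hpq : p * q = q * p - Complex.I • (1 : A) := by
    rw [← Algebra.algebraMap_eq_smul_one, ← h]; abel
  intro m
  induction m with
  | zero => simpa using hpq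
  | succ m ih =>
      have h1 : p * q ^ (m + 2) = (p * q ^ (m + 1)) * q := by
        rw [mul_assoc, ← pow_succ]
      rw [h1, ih, sub_mul, smul_mul_assoc, mul_assoc, ← pow_succ, hpq, mul_sub,
        ← mul_assoc, ← pow_succ, mul_smul_comm, mul_one]
      push_cast
      module

private lemma step (h : q * p - p * q = algebraMap ℂ A Complex.I) (N k m : ℕ) :
    q ^ (k + 1) * p ^ (N + 1) * q ^ m
      = q ^ k * p ^ (N + 1) * q ^ (m + 1)
        + (((N : ℂ) + 1) * Complex.I) • (q ^ k * p ^ N * q ^ m) := by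
  have h1 : q ^ (k + 1) * p ^ (N + 1) * q ^ m = q ^ k * ((q * p ^ (N + 1)) * q ^ m) := by
    rw [pow_succ, mul_assoc, mul_assoc, mul_assoc]
  rw [h1, key1 q p h, add_mul, smul_mul_assoc, mul_add, mul_smul_comm, mul_assoc,
    ← pow_succ', ← mul_assoc, ← mul_assoc]

private lemma TB (h : q * p - p * q = algebraMap ℂ A Complex.I) (n k : ℕ) (hk : k ≤ n + 1) :
    (q * p + p * q) * (q ^ k * p ^ (n + 1) * q ^ (n + 1 - k))
      = q ^ k * p ^ (n + 2) * q ^ (n + 2 - k) + q ^ (k + 1) * p ^ (n + 2) * q ^ (n + 1 - k)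
        + ((((n : ℂ) + 1) - 2 * k) * Complex.I) • (q ^ k * p ^ (n + 1) * q ^ (n + 1 - k)) := by
  have hqp : q * p = p * q + Complex.I • (1 : A) := by
    rw [← Algebra.algebraMap_eq_smul_one, ← h]; abel
  set B := q ^ k * p ^ (n + 1) * q ^ (n + 1 - k) with hB
  have hPQ : (p * q) * B = q ^ (k + 1) * p ^ (n + 2) * q ^ (n + 1 - k)
      - (((k : ℂ) + 1) * Complex.I) • B := by
    have e1 : (p * q) * B = (p * q ^ (k + 1)) * (p ^ (n + 1) * q ^ (n + 1 - k)) := by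
      simp only [hB, pow_succ', mul_assoc]
    rw [e1, key2 q p h, sub_mul, smul_mul_assoc, mul_assoc, ← mul_assoc p, ← pow_succ',
      ← mul_assoc, ← mul_assoc, ← hB]
  have hQP : (q * p) * B = (p * q) * B + Complex.I • B := by
    rw [hqp, add_mul, smul_mul_assoc, one_mul]
  have hstep : q ^ (k + 1) * p ^ (n + 2) * q ^ (n + 1 - k)
      = q ^ k * p ^ (n + 2) * q ^ (n + 2 - k) + (((n : ℂ) + 2) * Complex.I) • B := by
    have e2 : n + 1 - k + 1 = n + 2 - k := by omega
    have := step q p h (n + 1) k (n + 1 - k)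
    rw [e2] at this
    rw [this]
    push_cast
    module
  rw [add_mul, hQP, hPQ, hstep]
  module

private lemma REC (h : q * p - p * q = algebraMap ℂ A Complex.I) (n : ℕ) :
    (q * p + p * q) * (∑ k ∈ range (n + 2), ((n + 1).choose k : A) * (q ^ k * p ^ (n + 1) * q ^ (n + 1 - k)))
      = (∑ k ∈ range (n + 3), ((n + 2).choose k : A) * (q ^ k * p ^ (n + 2) * q ^ (n + 2 - k)))
        + (((n : ℂ) + 1) ^ 2) • (∑ k ∈ range (n + 1), (n.choose k : A) * (q ^ k * p ^ n * q ^ (n - k))) := by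
  simp only [natsmul, Finset.mul_sum, mul_smul_comm]
  have split : ∀ k ∈ range (n + 2),
      (((n + 1).choose k : ℕ) : ℂ) • ((q * p + p * q) * (q ^ k * p ^ (n + 1) * q ^ (n + 1 - k)))
        = (((n + 1).choose k : ℕ) : ℂ) • (q ^ k * p ^ (n + 2) * q ^ (n + 2 - k))
          + (((n + 1).choose k : ℕ) : ℂ) • (q ^ (k + 1) * p ^ (n + 2) * q ^ (n + 1 - k))
          + ((((n + 1).choose k : ℕ) : ℂ) * ((((n : ℂ) + 1) - 2 * k) * Complex.I))
              • (q ^ k * p ^ (n + 1) * q ^ (n + 1 - k)) := by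
    intro k hk
    rw [TB q p h n k (by simpa using Nat.lt_succ_iff.mp (mem_range.mp hk))]
    rw [smul_add, smul_add, smul_smul]
  rw [Finset.sum_congr rfl split, Finset.sum_add_distrib, Finset.sum_add_distrib]
  have hS12 : (∑ k ∈ range (n + 2), (((n + 1).choose k : ℕ) : ℂ) • (q ^ k * p ^ (n + 2) * q ^ (n + 2 - k)))
        + ∑ k ∈ range (n + 2), (((n + 1).choose k : ℕ) : ℂ) • (q ^ (k + 1) * p ^ (n + 2) * q ^ (n + 1 - k))
      = ∑ j ∈ range (n + 3), (((n + 2).choose j : ℕ) : ℂ) • (q ^ j * p ^ (n + 2) * q ^ (n + 2 - j)) := by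
    have := pascal_sum (fun j => q ^ j * p ^ (n + 2) * q ^ (n + 2 - j)) n
    rw [this]
    congr 1
    refine Finset.sum_congr rfl fun k hk => ?_
    have : n + 2 - (k + 1) = n + 1 - k := by omega
    rw [this]
  have hS3 : ∑ k ∈ range (n + 2),
        ((((n + 1).choose k : ℕ) : ℂ) * ((((n : ℂ) + 1) - 2 * k) * Complex.I))
          • (q ^ k * p ^ (n + 1) * q ^ (n + 1 - k))
      = (((n : ℂ) + 1) ^ 2) • ∑ k ∈ range (n + 1),
          ((n.choose k : ℕ) : ℂ) • (q ^ k * p ^ n * q ^ (n - k)) := by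
    rw [abel_sum (fun k => q ^ k * p ^ (n + 1) * q ^ (n + 1 - k))
        (fun k => (((n : ℂ) + 1) * (n.choose k : ℕ)) * Complex.I)
        (fun k => (((n + 1).choose k : ℕ) : ℂ) * ((((n : ℂ) + 1) - 2 * k) * Complex.I)) n]
    · rw [Finset.smul_sum]
      refine Finset.sum_congr rfl fun k hk => ?_
      have hkn : k ≤ n := Nat.lt_succ_iff.mp (mem_range.mp hk)
      have hstep : q ^ (k + 1) * p ^ (n + 1) * q ^ (n + 1 - (k + 1))
          = q ^ k * p ^ (n + 1) * q ^ (n + 1 - k)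
            + (((n : ℂ) + 1) * Complex.I) • (q ^ k * p ^ n * q ^ (n - k)) := by
        have e2 : n + 1 - (k + 1) = n - k := by omega
        have e3 : n - k + 1 = n + 1 - k := by omega
        rw [e2, step q p h n k (n - k), e3]
      rw [hstep]
      have : q ^ k * p ^ (n + 1) * q ^ (n + 1 - k)
            - (q ^ k * p ^ (n + 1) * q ^ (n + 1 - k)
              + (((n : ℂ) + 1) * Complex.I) • (q ^ k * p ^ n * q ^ (n - k)))
          = (-(((n : ℂ) + 1) * Complex.I)) • (q ^ k * p ^ n * q ^ (n - k)) := by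
        rw [neg_smul]
        abel
      rw [this, smul_smul, smul_smul]
      congr 1
      linear_combination (-((((n : ℂ) + 1)) ^ 2 * ((n.choose k : ℕ) : ℂ))) * Complex.I_mul_I
    · simp
    · intro k
      have := coeff_id n k
      push_cast
      linear_combination Complex.I * this
    · simp [Nat.choose_eq_zero_of_lt]
  rw [hS12, hS3]

end weylAux

open Finset in
theorem stmt_11 {A : Type*} [Ring A] [Algebra ℂ A] (q p : A)
    (h : q * p - p * q = algebraMap ℂ A Complex.I)
    (S : ℕ → Polynomial ℂ)
    (h0 : S 0 = 1) (h1 : S 1 = Polynomial.X)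
    (hrec : ∀ n : ℕ, S (n + 2) =
      Polynomial.X * S (n + 1) - Polynomial.C (((n : ℂ) + 1) ^ 2) * S n)
    (n : ℕ) :
    ∑ k ∈ range (n + 1), (n.choose k : A) * (q ^ k * p ^ n * q ^ (n - k)) =
      Polynomial.aeval (q * p + p * q) (S n) := by
  induction n using Nat.twoStepInduction with
  | zero => simp [h0]
  | one =>
      simp [h1, Finset.sum_range_succ]
      abel
  | more n ih1 ih2 =>
      rw [hrec n, map_sub, map_mul, map_mul, Polynomial.aeval_X, Polynomial.aeval_C,
        ← ih1, ← ih2]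
      rw [show n + 1 + 1 = n + 2 from rfl, show n + 2 + 1 = n + 3 from rfl]
      rw [REC q p h n, ← Algebra.smul_def]
      rw [add_sub_cancel_right]
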